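/- For ν > 0, α ∈ ℝ, τ ∈ ℝ, the integral ∫₀^∞ y^ν φ(y) Φ(α y + τ) dy equals 2^{(ν-2)/2} π^{-1/2} Γ((ν+1)/2) Ψ(α √(ν+1); -τ, ν+1), where φ is the standard normal density, Φ is the standard normal cdf, and Ψ(x; κ, m) denotes the cdf at x of a noncentral Student-t distribution with noncentrality parameter κ and m degrees of freedom. -/

import Mathlib

open MeasureTheory ProbabilityTheory Real Set

/-- Standard normal density. -/
noncomputable def stdNormalPDF (y : ℝ) : ℝ := (Real.sqrt (2 * Real.pi))⁻¹ * Real.exp (-y ^ 2 / 2)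

/-- Standard normal cdf. -/
noncomputable def stdNormalCDF (x : ℝ) : ℝ := ∫ y in Set.Iic x, stdNormalPDF y

/-- Noncentral Student-t cdf with noncentrality `κ` and `m` degrees of freedom:
the cdf of `(Z + κ)/√(W/m)` for independent `Z ~ N(0,1)` and `W ~ χ²_m`. -/
noncomputable def noncentralTCDF (x κ m : ℝ) : ℝ :=
  (((gaussianReal 0 1).prod (gammaMeasure (m / 2) (1 / 2)))
    {p : ℝ × ℝ | (p.1 + κ) / Real.sqrt (p.2 / m) ≤ x}).toReal

lemma stdNormalPDF_eq_gaussianPDFReal : stdNormalPDF = gaussianPDFReal 0 1 := by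
  funext x
  simp [stdNormalPDF, gaussianPDFReal]

lemma gaussianReal_Iic (t : ℝ) :
    gaussianReal 0 1 (Iic t) = ENNReal.ofReal (stdNormalCDF t) := by
  rw [gaussianReal_apply_eq_integral 0 one_ne_zero, stdNormalCDF, stdNormalPDF_eq_gaussianPDFReal]

lemma stdNormalCDF_nonneg (t : ℝ) : 0 ≤ stdNormalCDF t := by
  apply integral_nonneg
  intro y
  unfold stdNormalPDF
  positivity

lemma stdNormalCDF_mono : Monotone stdNormalCDF := by
  intro a b hab
  have h1 := gaussianReal_Iic a
  have h2 := gaussianReal_Iic b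
  have h := measure_mono (μ := gaussianReal 0 1) (Iic_subset_Iic.mpr hab)
  rw [h1, h2] at h
  exact (ENNReal.ofReal_le_ofReal_iff (stdNormalCDF_nonneg b)).mp h

lemma stdNormalCDF_measurable : Measurable stdNormalCDF := stdNormalCDF_mono.measurable

lemma ae_ne_zero' : ∀ᵐ w : ℝ, w ≠ 0 := by
  rw [ae_iff]
  push_neg
  simp [Set.setOf_eq_eq_singleton]

lemma noncentralTCDF_eq_integral (ν α τ : ℝ) (hν : 0 < ν) :
    noncentralTCDF (α * Real.sqrt (ν + 1)) (-τ) (ν + 1)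
      = ∫ w in Ioi (0 : ℝ),
          gammaPDFReal ((ν + 1) / 2) (1 / 2) w * stdNormalCDF (α * Real.sqrt w + τ) := by
  have hm : (0:ℝ) < ν + 1 := by linarith
  have ha2 : (0:ℝ) < (ν + 1) / 2 := by linarith
  set S := {p : ℝ × ℝ | (p.1 + -τ) / Real.sqrt (p.2 / (ν + 1)) ≤ α * Real.sqrt (ν + 1)} with hS
  have hSm : MeasurableSet S := by
    apply measurableSet_le _ measurable_const
    fun_prop
  have hgm : Measurable (gammaPDF ((ν + 1) / 2) (1 / 2)) :=
    (measurable_gammaPDFReal _ _).ennreal_ofReal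
  haveI : IsProbabilityMeasure (gammaMeasure ((ν + 1) / 2) (1 / 2)) :=
    isProbabilityMeasure_gammaMeasure ha2 (by norm_num)
  have hF : Measurable fun w : ℝ => (gaussianReal 0 1) ((fun z => (z, w)) ⁻¹' S) :=
    measurable_measure_prodMk_right hSm
  have hkey : ((gaussianReal 0 1).prod (gammaMeasure ((ν + 1) / 2) (1 / 2))) S
      = ∫⁻ w, ENNReal.ofReal
          (gammaPDFReal ((ν + 1) / 2) (1 / 2) w * stdNormalCDF (α * Real.sqrt w + τ)) := by
    rw [Measure.prod_apply_symm hSm,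
      show gammaMeasure ((ν + 1) / 2) (1 / 2)
          = volume.withDensity (gammaPDF ((ν + 1) / 2) (1 / 2)) from rfl,
      lintegral_withDensity_eq_lintegral_mul _ hgm hF]
    apply lintegral_congr_ae
    filter_upwards [ae_ne_zero'] with w hw
    rcases lt_or_gt_of_ne hw with hneg | hpos
    · simp [Pi.mul_apply, gammaPDF_of_neg hneg, gammaPDFReal, not_le.mpr hneg]
    · have hset : ((fun z => (z, w)) ⁻¹' S) = Iic (α * Real.sqrt w + τ) := by
        ext z
        simp only [hS, mem_preimage, mem_setOf_eq, mem_Iic]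
        have hsq : 0 < Real.sqrt (w / (ν + 1)) := Real.sqrt_pos.mpr (by positivity)
        rw [div_le_iff₀ hsq, mul_assoc,
          show Real.sqrt (ν + 1) * Real.sqrt (w / (ν + 1)) = Real.sqrt w by
            rw [← Real.sqrt_mul hm.le, mul_div_cancel₀ _ (ne_of_gt hm)]]
        constructor <;> intro h <;> linarith
      simp only [Pi.mul_apply]
      rw [hset, gaussianReal_Iic, gammaPDF,
        ← ENNReal.ofReal_mul (gammaPDFReal_nonneg ha2 (by norm_num) w)]
  unfold noncentralTCDF
  rw [hkey, ← integral_eq_lintegral_of_nonneg_ae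
      (ae_of_all _ fun w =>
        mul_nonneg (gammaPDFReal_nonneg ha2 (by norm_num) w) (stdNormalCDF_nonneg _))
      (((measurable_gammaPDFReal _ _).mul
        (stdNormalCDF_measurable.comp (by fun_prop))).aestronglyMeasurable)]
  rw [← integral_indicator measurableSet_Ioi]
  apply integral_congr_ae
  filter_upwards [ae_ne_zero'] with w hw
  rcases lt_or_gt_of_ne hw with hneg | hpos
  · rw [Set.indicator_of_notMem (by simpa using hneg.le)]
    simp [gammaPDFReal, not_le.mpr hneg]
  · rw [Set.indicator_of_mem (by simpa using hpos)]

theorem skewNormal_moment_integral (ν α τ : ℝ) (hν : 0 < ν) :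
    ∫ y in Set.Ioi (0 : ℝ), y ^ ν * stdNormalPDF y * stdNormalCDF (α * y + τ)
      = 2 ^ ((ν - 2) / 2) * Real.pi ^ (-(1 : ℝ) / 2) * Real.Gamma ((ν + 1) / 2) *
        noncentralTCDF (α * Real.sqrt (ν + 1)) (-τ) (ν + 1) := by
  have hΓ : Real.Gamma ((ν + 1) / 2) ≠ 0 := (Real.Gamma_pos_of_pos (by linarith)).ne'
  have hc : 2 ^ ((ν - 2) / 2) * Real.pi ^ (-(1:ℝ) / 2) * Real.Gamma ((ν + 1) / 2) *
      ((1 / 2 : ℝ) ^ ((ν + 1) / 2) / Real.Gamma ((ν + 1) / 2) * 2)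
      = (Real.sqrt (2 * Real.pi))⁻¹ := by
    have h2 : ((1/2:ℝ)) ^ ((ν + 1) / 2) = 2 ^ (-((ν + 1) / 2)) := by
      rw [one_div, Real.inv_rpow two_pos.le, ← Real.rpow_neg two_pos.le]
    rw [h2, show 2 ^ ((ν - 2) / 2) * Real.pi ^ (-(1:ℝ) / 2) * Real.Gamma ((ν + 1) / 2) *
        ((2:ℝ) ^ (-((ν + 1) / 2)) / Real.Gamma ((ν + 1) / 2) * 2)
        = ((2:ℝ) ^ ((ν - 2) / 2) * (2:ℝ) ^ (-((ν + 1) / 2)) * (2:ℝ) ^ (1:ℝ)) *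
          Real.pi ^ (-(1:ℝ) / 2) * (Real.Gamma ((ν + 1) / 2) / Real.Gamma ((ν + 1) / 2)) by
        rw [Real.rpow_one]; ring,
      div_self hΓ, mul_one, ← Real.rpow_add two_pos, ← Real.rpow_add two_pos,
      show (ν - 2) / 2 + -((ν + 1) / 2) + 1 = -(1:ℝ)/2 by ring,
      ← Real.mul_rpow two_pos.le Real.pi_pos.le,
      show -(1:ℝ)/2 = -(1/2:ℝ) by norm_num,
      Real.rpow_neg (by positivity), Real.sqrt_eq_rpow]
  rw [noncentralTCDF_eq_integral ν α τ hν]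
  conv_rhs => rw [← integral_comp_rpow_Ioi_of_pos two_pos, ← integral_const_mul]
  refine setIntegral_congr_fun measurableSet_Ioi fun y hy => ?_
  have hy : (0:ℝ) < y := hy
  have e1 : Real.sqrt (y ^ (2:ℝ)) = y := by
    rw [Real.rpow_two, Real.sqrt_sq hy.le]
  have e2 : gammaPDFReal ((ν + 1) / 2) (1 / 2) (y ^ (2:ℝ))
      = (1 / 2 : ℝ) ^ ((ν + 1) / 2) / Real.Gamma ((ν + 1) / 2) * y ^ (ν - 1) *
        Real.exp (-y ^ 2 / 2) := by
    rw [gammaPDFReal, if_pos (Real.rpow_nonneg hy.le _), ← Real.rpow_mul hy.le,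
      show (2:ℝ) * ((ν + 1) / 2 - 1) = ν - 1 by ring, Real.rpow_two,
      show -((1:ℝ) / 2 * y ^ 2) = -y ^ 2 / 2 by ring]
  have e3 : y * y ^ (ν - 1) = y ^ ν := by
    have h := Real.rpow_add hy 1 (ν - 1)
    rw [Real.rpow_one, show (1:ℝ) + (ν - 1) = ν by ring] at h
    exact h.symm
  rw [smul_eq_mul, e1, e2, show (2:ℝ) - 1 = 1 by norm_num, Real.rpow_one, ← e3,
    stdNormalPDF]
  linear_combination
    (-(y * y ^ (ν - 1) * Real.exp (-y ^ 2 / 2) * stdNormalCDF (α * y + τ))) * hc
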